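/- The probability measure α on the f-system 𝓐^uni is coherent: for every n ∈ ℕ, all real numbers α₁,…,αₙ and all A₁,…,Aₙ ∈ 𝓐^uni, sup_{x∈[0,∞)} Σ_{i=1}^n αᵢ(1_{A_i}(x) − α(A_i)) ≥ 0. -/

import Mathlib

open MeasureTheory Filter Set Topology

noncomputable section

namespace UPN

/-- The half line `[0,∞)` viewed as a subset of `ℝ`. -/
def Ray : Set ℝ := Set.Ici 0

/-- The indicator function `1_A`. -/
def ind (A : Set ℝ) : ℝ → ℝ := Set.indicator A fun _ => (1 : ℝ)

/-- The collection `𝓜` of countable unions `⋃ᵢ [a_{2i-1}, a_{2i})` for a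
nondecreasing nonnegative sequence `a`. -/
def Mcal : Set (Set ℝ) :=
  {A | ∃ a : ℕ → ℝ, 0 ≤ a 0 ∧ Monotone a ∧
        A = ⋃ i : ℕ, Set.Ico (a (2 * i)) (a (2 * i + 1))}

/-- The density function `ρ_A`: `ρ_A(0) = 0` and `ρ_A(x) = (1/x)∫₀ˣ 1_A(y) dy`. -/
def rho (A : Set ℝ) (x : ℝ) : ℝ :=
  if x = 0 then 0 else (1 / x) * ∫ y in (0:ℝ)..x, ind A y

/-- The collection `𝓒` of elements of `𝓜` having natural density. -/
def Ccal : Set (Set ℝ) :=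
  {A | A ∈ Mcal ∧ ∃ l : ℝ, Tendsto (rho A) atTop (𝓝 l)}

/-- The natural density `λ(A) = lim_{x→∞} ρ_A(x)`. -/
def lam (A : Set ℝ) : ℝ := limUnder atTop (rho A)

/-- `S_A(x) = m(A ∩ [0,x))`. -/
def Sfn (A : Set ℝ) (x : ℝ) : ℝ := (volume (A ∩ Set.Ico 0 x)).toReal

/-- The thinning operation `A ∘ B = {x : x ∈ A ∧ S_A(x) ∈ B}`. -/
def thin (A B : Set ℝ) : Set ℝ := {x | x ∈ A ∧ Sfn A x ∈ B}

/-- An f-system on `[0,∞)`: a nonempty collection of subsets of `[0,∞)` closed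
under complements (in `[0,∞)`) and finite disjoint unions. -/
structure IsFSystem (F : Set (Set ℝ)) : Prop where
  nonempty : F.Nonempty
  subset_ray : ∀ A ∈ F, A ⊆ Ray
  compl_mem : ∀ A ∈ F, Ray \ A ∈ F
  union_mem : ∀ A ∈ F, ∀ B ∈ F, A ∩ B = ∅ → A ∪ B ∈ F

/-- A probability pair `(F, μ)` on `[0,∞)`: `F` is an f-system and `μ` is a finitely
additive probability measure on `F` with values in `[0,1]` and `μ([0,∞)) = 1`. -/
structure IsProbPair (F : Set (Set ℝ)) (μ : Set ℝ → ℝ) : Prop where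
  fsystem : IsFSystem F
  nonneg : ∀ A ∈ F, 0 ≤ μ A
  le_one : ∀ A ∈ F, μ A ≤ 1
  ray_eq_one : μ Ray = 1
  additive : ∀ A ∈ F, ∀ B ∈ F, A ∩ B = ∅ → μ (A ∪ B) = μ A + μ B

/-- A weakly thinnable pair (WTP). -/
structure IsWTP (F : Set (Set ℝ)) (μ : Set ℝ → ℝ) : Prop where
  pair : IsProbPair F μ
  Ccal_subset : Ccal ⊆ F
  subset_Mcal : F ⊆ Mcal
  P1 : ∀ C ∈ Ccal, ∀ A ∈ F, thin C A ∈ F ∧ μ (thin C A) = μ C * μ A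
  P2 : ∀ A ∈ F, ∀ B ∈ F, (∀ x : ℝ, Sfn B x ≤ Sfn A x) → μ B ≤ μ A
  P3 : ∀ c : ℝ, 0 ≤ c → μ (Set.Ici c) = 1

/-- Coherence of a probability measure `μ` on an f-system `F` on `[0,∞)`. -/
def Coherent (F : Set (Set ℝ)) (μ : Set ℝ → ℝ) : Prop :=
  ∀ (n : ℕ) (a : Fin n → ℝ) (A : Fin n → Set ℝ), (∀ i, A i ∈ F) →
    0 ≤ ⨆ x : Ray, ∑ i, a i * (ind (A i) ↑x - μ (A i))

/-- `σ_A(D,x) = (1/D) ∫_x^{x+D} 1_A(y) dy`. -/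
def sigmaFn (A : Set ℝ) (D x : ℝ) : ℝ := (1 / D) * ∫ y in x..(x + D), ind A y

/-- `U(A) = limsup_{D→∞} sup_{x>0} σ_A(D,x)`. -/
def Ufn (A : Set ℝ) : ℝ :=
  limsup (fun D => ⨆ x : Set.Ioi (0:ℝ), sigmaFn A D ↑x) atTop

/-- `L(A) = liminf_{D→∞} inf_{x>0} σ_A(D,x)`. -/
def Lfn (A : Set ℝ) : ℝ :=
  liminf (fun D => ⨅ x : Set.Ioi (0:ℝ), sigmaFn A D ↑x) atTop

/-- `𝓦^uni = {A ∈ 𝓜 : L(A) = U(A)}`. -/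
def Wuni : Set (Set ℝ) := {A | A ∈ Mcal ∧ Lfn A = Ufn A}

/-- `log(A) = {log a : a ∈ A ∩ [1,∞)}`. -/
def logSet (A : Set ℝ) : Set ℝ := Real.log '' (A ∩ Set.Ici 1)

/-- `𝓐^uni = {A ∈ 𝓜 : log(A) ∈ 𝓦^uni}`. -/
def Auni : Set (Set ℝ) := {A | A ∈ Mcal ∧ logSet A ∈ Wuni}

/-- `α(A) = λ(log(A))`. -/
def alphaFn (A : Set ℝ) : ℝ := lam (logSet A)

/-- `ξ_A(D,x) = (1/log D) ∫_x^{Dx} ρ_A(y)/y dy`. -/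
def xi (A : Set ℝ) (D x : ℝ) : ℝ :=
  (1 / Real.log D) * ∫ y in x..(D * x), rho A y / y

/-- Membership in `𝓟`: `s` is a sequence in `(1,∞)` tending to `∞` and `f` is a
sequence in `(1,∞)`. -/
def memP (s f : ℕ → ℝ) : Prop :=
  (∀ n, 1 < s n) ∧ Tendsto s atTop atTop ∧ ∀ n, 1 < f n

/-- `𝓐^{s,f} = {A ∈ 𝓜 : lim_n ξ_A(s_n,f_n) exists}`. -/
def Asf (s f : ℕ → ℝ) : Set (Set ℝ) :=
  {A | A ∈ Mcal ∧ ∃ l : ℝ, Tendsto (fun n => xi A (s n) (f n)) atTop (𝓝 l)}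

/-- `α^{s,f}(A) = lim_n ξ_A(s_n,f_n)`. -/
def alphasf (s f : ℕ → ℝ) (A : Set ℝ) : ℝ :=
  limUnder atTop fun n => xi A (s n) (f n)

/-- `τ_A(C,j)`; here `j : ℕ` starting from `0` corresponds to the interval
`[C^j, C^{j+1})`, i.e. to the paper's `τ_A(C, j+1)`. -/
def tau (A : Set ℝ) (C : ℝ) (j : ℕ) : ℝ :=
  (1 / (C ^ j * (C - 1))) * ∫ y in (C ^ j : ℝ)..(C ^ (j + 1)), ind A y

/-- `U^*(C,A) = limsup_{n→∞} sup_k (1/n) Σ_{j=k}^{k+n-1} τ_A(C,j)`. -/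
def Ustar (C : ℝ) (A : Set ℝ) : ℝ :=
  limsup (fun n : ℕ => ⨆ k : ℕ, (1 / (n : ℝ)) * ∑ i ∈ Finset.range n, tau A C (k + i)) atTop

lemma ind_nonneg (A : Set ℝ) (x : ℝ) : 0 ≤ ind A x :=
  Set.indicator_nonneg (fun _ _ => zero_le_one) x

lemma ind_le_one (A : Set ℝ) (x : ℝ) : ind A x ≤ 1 := by
  by_cases h : x ∈ A <;> simp [ind, h]

lemma intervalIntegrable_ind {A : Set ℝ} (hA : MeasurableSet A) (a b : ℝ) :
    IntervalIntegrable (ind A) volume a b := by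
  refine (intervalIntegrable_const (c := (1:ℝ))).mono_fun'
    ((measurable_const.indicator hA).aestronglyMeasurable) ?_
  refine Filter.Eventually.of_forall fun x => ?_
  show ‖ind A x‖ ≤ (1:ℝ)
  rw [Real.norm_eq_abs, abs_of_nonneg (ind_nonneg A x)]
  exact ind_le_one A x

lemma integral_ind_nonneg {A : Set ℝ} {a b : ℝ} (h : a ≤ b) :
    0 ≤ ∫ y in a..b, ind A y :=
  intervalIntegral.integral_nonneg h fun x _ => ind_nonneg A x

lemma integral_ind_le {A : Set ℝ} (hA : MeasurableSet A) {a b : ℝ} (h : a ≤ b) :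
    ∫ y in a..b, ind A y ≤ b - a := by
  calc ∫ y in a..b, ind A y ≤ ∫ _ in a..b, (1:ℝ) :=
        intervalIntegral.integral_mono_on h (intervalIntegrable_ind hA a b)
          intervalIntegrable_const (fun x _ => ind_le_one A x)
    _ = b - a := by simp

lemma measurableSet_of_mem_Mcal {A : Set ℝ} (hA : A ∈ Mcal) : MeasurableSet A := by
  obtain ⟨a, -, -, rfl⟩ := hA
  exact MeasurableSet.iUnion fun i => measurableSet_Ico

lemma sigma_mem {A : Set ℝ} (hA : MeasurableSet A) {D : ℝ} (hD : 0 < D) (x : ℝ) :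
    sigmaFn A D x ∈ Set.Icc (0:ℝ) 1 := by
  have h : x ≤ x + D := by linarith
  constructor
  · exact mul_nonneg (by positivity) (integral_ind_nonneg h)
  · have h2 := integral_ind_le hA h
    rw [sigmaFn, one_div, inv_mul_le_iff₀ hD, mul_one]
    linarith

lemma tendsto_rho_of_Wuni {B : Set ℝ} (hB : B ∈ Wuni) :
    Tendsto (rho B) atTop (𝓝 (lam B)) := by
  obtain ⟨hM, hLU⟩ := hB
  have hmeas := measurableSet_of_mem_Mcal hM
  set F : ℝ → ℝ := fun D => sigmaFn B D 1 with hFdef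
  set Fsup : ℝ → ℝ := fun D => ⨆ x : Set.Ioi (0:ℝ), sigmaFn B D ↑x with hFsupdef
  set Finf : ℝ → ℝ := fun D => ⨅ x : Set.Ioi (0:ℝ), sigmaFn B D ↑x with hFinfdef
  have hbddA : ∀ D : ℝ, 0 < D → BddAbove (range fun x : Set.Ioi (0:ℝ) => sigmaFn B D ↑x) :=
    fun D hD => ⟨1, forall_mem_range.2 fun x => (sigma_mem hmeas hD _).2⟩
  have hbddB : ∀ D : ℝ, 0 < D → BddBelow (range fun x : Set.Ioi (0:ℝ) => sigmaFn B D ↑x) :=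
    fun D hD => ⟨0, forall_mem_range.2 fun x => (sigma_mem hmeas hD _).1⟩
  have hone : (1:ℝ) ∈ Set.Ioi (0:ℝ) := by norm_num
  have hFle : ∀ᶠ D in atTop, F D ≤ Fsup D :=
    eventually_atTop.2 ⟨1, fun D hD =>
      le_ciSup (hbddA D (by linarith)) (⟨1, hone⟩ : Set.Ioi (0:ℝ))⟩
  have hFge : ∀ᶠ D in atTop, Finf D ≤ F D :=
    eventually_atTop.2 ⟨1, fun D hD =>
      ciInf_le (hbddB D (by linarith)) (⟨1, hone⟩ : Set.Ioi (0:ℝ))⟩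
  have hF01 : ∀ᶠ D in atTop, F D ∈ Set.Icc (0:ℝ) 1 :=
    eventually_atTop.2 ⟨1, fun D hD => sigma_mem hmeas (by linarith) 1⟩
  have hFsup_le : ∀ᶠ D in atTop, Fsup D ≤ 1 :=
    eventually_atTop.2 ⟨1, fun D hD =>
      ciSup_le fun x => (sigma_mem hmeas (by linarith) _).2⟩
  have hFinf_ge : ∀ᶠ D in atTop, (0:ℝ) ≤ Finf D :=
    eventually_atTop.2 ⟨1, fun D hD =>
      le_ciInf fun x => (sigma_mem hmeas (by linarith) _).1⟩
  have hFbdd_le : IsBoundedUnder (· ≤ ·) atTop F :=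
    isBoundedUnder_of_eventually_le (hF01.mono fun D h => h.2)
  have hFbdd_ge : IsBoundedUnder (· ≥ ·) atTop F :=
    isBoundedUnder_of_eventually_ge (hF01.mono fun D h => h.1)
  have hlimsup : limsup F atTop ≤ Ufn B := by
    rw [Ufn]
    exact limsup_le_limsup hFle hFbdd_ge.isCoboundedUnder_le
      (isBoundedUnder_of_eventually_le hFsup_le)
  have hliminf : Lfn B ≤ liminf F atTop := by
    rw [Lfn]
    exact liminf_le_liminf hFge (isBoundedUnder_of_eventually_ge hFinf_ge)
      hFbdd_le.isCoboundedUnder_ge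
  have hFt : Tendsto F atTop (𝓝 (Ufn B)) :=
    tendsto_of_le_liminf_of_limsup_le (hLU ▸ hliminf) hlimsup hFbdd_le hFbdd_ge
  set ℓ : ℝ := Ufn B
  -- identify rho with F
  set c : ℝ := ∫ y in (0:ℝ)..1, ind B y with hc
  have key : ∀ᶠ x in atTop, (1 / x) * c + ((x - 1) / x) * F (x - 1) = rho B x := by
    refine eventually_atTop.2 ⟨2, fun x hx => ?_⟩
    have hx0 : x ≠ 0 := by linarith
    have hx1 : x - 1 ≠ 0 := by linarith
    rw [rho, if_neg hx0,
      ← intervalIntegral.integral_add_adjacent_intervals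
        (intervalIntegrable_ind hmeas 0 1) (intervalIntegrable_ind hmeas 1 x)]
    have hFx : F (x - 1) = (1 / (x - 1)) * ∫ y in (1:ℝ)..x, ind B y := by
      rw [hFdef]; simp only [sigmaFn]
      norm_num
    rw [hFx, ← hc]
    field_simp
  have h1 : Tendsto (fun x : ℝ => (1 / x) * c) atTop (𝓝 0) := by
    have := tendsto_inv_atTop_zero (𝕜 := ℝ)
    simpa [one_div] using this.mul_const c
  have h2 : Tendsto (fun x : ℝ => (x - 1) / x) atTop (𝓝 1) := by
    have h := tendsto_const_nhds (α := ℝ) (x := (1:ℝ)) |>.sub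
      (tendsto_inv_atTop_zero (𝕜 := ℝ))
    rw [sub_zero] at h
    refine h.congr' ?_
    refine eventually_atTop.2 ⟨1, fun x hx => ?_⟩
    have hx0 : x ≠ 0 := by linarith
    field_simp
  have h3 : Tendsto (fun x : ℝ => F (x - 1)) atTop (𝓝 ℓ) := by
    apply hFt.comp
    exact (tendsto_atTop_add_const_right atTop (-1) tendsto_id).congr
      (fun x => by simp [sub_eq_add_neg])
  have hall : Tendsto (rho B) atTop (𝓝 ℓ) := by
    have := (h1.add (h2.mul h3)).congr' key
    simpa using this
  have : lam B = ℓ := hall.limUnder_eq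
  rw [lam, hall.limUnder_eq]
  exact hall


lemma mem_logSet_iff {A : Set ℝ} {u : ℝ} (hu : 0 ≤ u) :
    u ∈ logSet A ↔ Real.exp u ∈ A := by
  constructor
  · rintro ⟨y, ⟨hyA, hy1⟩, rfl⟩
    rwa [Real.exp_log (lt_of_lt_of_le one_pos hy1)]
  · intro h
    exact ⟨Real.exp u, ⟨h, Real.one_le_exp hu⟩, Real.log_exp u⟩

/-- The probability measure `α` on the f-system `𝓐^uni` is coherent. -/
theorem stmt5 : Coherent Auni alphaFn := by
  intro n a A hA
  set g : ℝ → ℝ := fun x => ∑ i, a i * (ind (A i) x - alphaFn (A i)) with hg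
  have hbound : ∀ x : ℝ, g x ≤ ∑ i, |a i| * (1 + |alphaFn (A i)|) := by
    intro x
    refine Finset.sum_le_sum fun i _ => ?_
    calc a i * (ind (A i) x - alphaFn (A i))
        ≤ |a i * (ind (A i) x - alphaFn (A i))| := le_abs_self _
      _ = |a i| * |ind (A i) x - alphaFn (A i)| := abs_mul _ _
      _ ≤ |a i| * (1 + |alphaFn (A i)|) := by
          refine mul_le_mul_of_nonneg_left ?_ (abs_nonneg _)
          calc |ind (A i) x - alphaFn (A i)| ≤ |ind (A i) x| + |alphaFn (A i)| :=
                abs_sub _ _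
            _ ≤ 1 + |alphaFn (A i)| := by
                have h1 := ind_nonneg (A i) x
                have h2 := ind_le_one (A i) x
                rw [abs_of_nonneg h1]
                linarith
  have hbdd : BddAbove (range fun x : Ray => g ↑x) :=
    ⟨_, forall_mem_range.2 fun x => hbound ↑x⟩
  have hle : ∀ x : ℝ, 0 ≤ x → g x ≤ ⨆ x : Ray, g ↑x := fun x hx =>
    le_ciSup hbdd (⟨x, hx⟩ : Ray)
  set S : ℝ := ⨆ x : Ray, g ↑x with hS
  set B : Fin n → Set ℝ := fun i => logSet (A i) with hB
  have hBW : ∀ i, B i ∈ Wuni := fun i => (hA i).2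
  have hmeas : ∀ i, MeasurableSet (B i) := fun i =>
    measurableSet_of_mem_Mcal (hBW i).1
  have htend : ∀ i, Tendsto (rho (B i)) atTop (𝓝 (alphaFn (A i))) := fun i =>
    tendsto_rho_of_Wuni (hBW i)
  set G : ℝ → ℝ := fun u => ∑ i, a i * (ind (B i) u - alphaFn (A i)) with hG
  have hGS : ∀ u : ℝ, 0 ≤ u → G u ≤ S := by
    intro u hu
    have heq : G u = g (Real.exp u) := by
      refine Finset.sum_congr rfl fun i _ => ?_
      have : ind (B i) u = ind (A i) (Real.exp u) := by
        unfold ind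
        by_cases h : Real.exp u ∈ A i
        · rw [Set.indicator_of_mem ((mem_logSet_iff hu).2 h : u ∈ B i),
            Set.indicator_of_mem h]
        · rw [Set.indicator_of_notMem
            (fun hh => h ((mem_logSet_iff hu).1 hh) : u ∉ B i),
            Set.indicator_of_notMem h]
      rw [this]
    rw [heq]
    exact hle _ (Real.exp_pos u).le
  have hint : ∀ (i : Fin n) (T : ℝ),
      IntervalIntegrable (fun u => a i * (ind (B i) u - alphaFn (A i))) volume 0 T :=
    fun i T => (((intervalIntegrable_ind (hmeas i) 0 T).sub
      intervalIntegrable_const).const_mul _)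
  have hkey : ∀ T : ℝ, 0 < T → ∑ i, a i * (rho (B i) T - alphaFn (A i)) ≤ S := by
    intro T hT
    have hGint : IntervalIntegrable G volume 0 T := by
      have h := IntervalIntegrable.sum
        (f := fun (i : Fin n) (u : ℝ) => a i * (ind (B i) u - alphaFn (A i)))
        Finset.univ fun i _ => hint i T
      simpa [Finset.sum_fn] using h
    have h1 : ∫ u in (0:ℝ)..T, G u ≤ T * S := by
      calc ∫ u in (0:ℝ)..T, G u ≤ ∫ _ in (0:ℝ)..T, S :=
            intervalIntegral.integral_mono_on hT.le hGint intervalIntegrable_const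
              (fun u hu => hGS u hu.1)
        _ = T * S := by simp [smul_eq_mul]
    have h2 : ∫ u in (0:ℝ)..T, G u
        = ∑ i, a i * ((∫ u in (0:ℝ)..T, ind (B i) u) - T * alphaFn (A i)) := by
      simp only [hG]
      rw [intervalIntegral.integral_finset_sum (fun i _ => hint i T)]
      refine Finset.sum_congr rfl fun i _ => ?_
      rw [intervalIntegral.integral_const_mul,
        intervalIntegral.integral_sub (intervalIntegrable_ind (hmeas i) 0 T)
          intervalIntegrable_const,
        intervalIntegral.integral_const]
      try simp [smul_eq_mul]
    have h3 : ∀ i : Fin n, rho (B i) T = (1 / T) * ∫ u in (0:ℝ)..T, ind (B i) u :=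
      fun i => by rw [rho, if_neg hT.ne']
    calc ∑ i, a i * (rho (B i) T - alphaFn (A i))
        = (1 / T) * ∫ u in (0:ℝ)..T, G u := by
          rw [h2, Finset.mul_sum]
          refine Finset.sum_congr rfl fun i _ => ?_
          rw [h3 i]
          field_simp
          try ring
      _ ≤ (1 / T) * (T * S) := mul_le_mul_of_nonneg_left h1 (by positivity)
      _ = S := by field_simp
  have hlim : Tendsto (fun T => ∑ i, a i * (rho (B i) T - alphaFn (A i)))
      atTop (𝓝 0) := by
    have h : Tendsto (fun T => ∑ i, a i * (rho (B i) T - alphaFn (A i)))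
        atTop (𝓝 (∑ i : Fin n, a i * (alphaFn (A i) - alphaFn (A i)))) :=
      tendsto_finset_sum _ fun i _ =>
        (((htend i).sub tendsto_const_nhds).const_mul _)
    simpa using h
  exact le_of_tendsto hlim
    (eventually_atTop.2 ⟨1, fun T hT => hkey T (lt_of_lt_of_le one_pos hT)⟩)


end UPN
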